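/- arXiv:2012.07614 — 2 statements merged into one kernel-verified Lean document; each statement's English description precedes it below -/
import Mathlib

section
/- Let v ∈ (0,1) and let p = (Σ₁ⁱ,Σ₂ⁱ,Σ₃ⁱ) lie on the Kasner circle. Define the line ℓ(η) = η·p + (η-1)·(2,-1,-1)/v for η ∈ ℝ. Then ℓ(η) lies on the Kasner circle if and only if η = 1 or η = g, where g = (1-v²)/(1+v²+Σ₁ⁱ v). -/
theorem typeII_line_meets_kasner (v S₁ S₂ S₃ : ℝ) (hv : v ∈ Set.Ioo (0:ℝ) 1)
    (hsum : S₁ + S₂ + S₃ = 0) (hsq : S₁^2 + S₂^2 + S₃^2 = 6)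
    (hden : 1 + v^2 + S₁ * v ≠ 0) (η : ℝ) :
    ((η*S₁ + (η-1)*2/v) + (η*S₂ + (η-1)*(-1)/v) + (η*S₃ + (η-1)*(-1)/v) = 0 ∧
     (η*S₁ + (η-1)*2/v)^2 + (η*S₂ + (η-1)*(-1)/v)^2 + (η*S₃ + (η-1)*(-1)/v)^2 = 6) ↔
    (η = 1 ∨ η = (1 - v^2)/(1 + v^2 + S₁*v)) := by
  obtain ⟨hv0, hv1⟩ := hv
  have hvne : v ≠ 0 := ne_of_gt hv0
  have hden' : 1 + v^2 + S₁*v ≠ 0 := hden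
  constructor
  · rintro ⟨h1, h2⟩
    field_simp at h2
    have key : (η - 1) * (η * (1 + v^2 + S₁*v) + v^2 - 1) = 0 := by
      linear_combination (1/6) * h2 - (η^2*v^2/6) * hsq + (η*v*(η-1)/3) * hsum
    rcases mul_eq_zero.mp key with h | h
    · left; linarith
    · right
      rw [eq_div_iff hden']
      linarith
  · intro h
    have hη : η * (1 + v^2 + S₁*v) = 1 - v^2 ∨ η = 1 := by
      rcases h with h | h
      · right; exact h
      · left; rw [h, div_mul_cancel₀ _ hden']
    rcases hη with hη | rfl
    · constructor
      · field_simp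
        linear_combination η*v*hsum
      · field_simp
        linear_combination 6*(η-1)*hη + η^2*v^2*hsq - 2*η*v*(η-1)*hsum
    · constructor
      · simpa using hsum
      · simpa using hsq
end

section
/- The Farey map F on [0,1], defined by F(x) = x/(1-x) for 0 ≤ x ≤ 1/2 and F(x) = (1-x)/x for 1/2 ≤ x ≤ 1, has x* = (√13 - 1)/6 as a periodic point of minimal period 3: F³(x*) = x*, while F(x*) ≠ x* and F²(x*) ≠ x*. -/
/-- The Farey map on the unit interval. -/
noncomputable def fareyMap (x : ℝ) : ℝ := if x ≤ 1/2 then x/(1-x) else (1-x)/x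

theorem farey_period_three :
    fareyMap (fareyMap (fareyMap ((Real.sqrt 13 - 1)/6))) = (Real.sqrt 13 - 1)/6 ∧
    fareyMap ((Real.sqrt 13 - 1)/6) ≠ (Real.sqrt 13 - 1)/6 ∧
    fareyMap (fareyMap ((Real.sqrt 13 - 1)/6)) ≠ (Real.sqrt 13 - 1)/6 := by
  set s := Real.sqrt 13 with hs
  have hs2 : s ^ 2 = 13 := Real.sq_sqrt (by norm_num)
  have h3 : 3 < s := by nlinarith [Real.sqrt_nonneg 13]
  have h4 : s < 4 := by nlinarith [Real.sqrt_nonneg 13]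
  have e1 : fareyMap ((s - 1)/6) = (s + 1)/6 := by
    rw [fareyMap, if_pos (by nlinarith)]
    rw [div_eq_iff (by nlinarith)]
    nlinarith
  have e2 : fareyMap ((s + 1)/6) = (s - 3)/2 := by
    rw [fareyMap, if_neg (by push_neg; nlinarith)]
    rw [div_eq_iff (by nlinarith)]
    nlinarith
  have e3 : fareyMap ((s - 3)/2) = (s - 1)/6 := by
    rw [fareyMap, if_pos (by nlinarith)]
    rw [div_eq_iff (by nlinarith)]
    nlinarith
  refine ⟨by rw [e1, e2, e3], ?_, ?_⟩
  · rw [e1]; intro h; nlinarith [h]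
  · rw [e1, e2]; intro h; nlinarith [h]
end
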